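/- A topological group (Hausdorff) admits a left invariant metric generating its topology if and only if it is first countable. -/

import Mathlib

open Set Function Filter Uniformity Topology NNReal List Pointwise Metric
open scoped SetRel

private theorem bk_find_congr {p q : ℕ → Prop} [DecidablePred p] [DecidablePred q]
    (h : ∀ n, p n ↔ q n) (hp : ∃ n, p n) (hq : ∃ n, q n) :
    Nat.find hp = Nat.find hq :=
  le_antisymm (Nat.find_min' hp ((h _).2 (Nat.find_spec hq)))
    (Nat.find_min' hq ((h _).1 (Nat.find_spec hp)))

private theorem bk_aux {G : Type*} [Group G] [TopologicalSpace G]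
    [IsTopologicalGroup G] [FirstCountableTopology G] :
    ∃ I : PseudoMetricSpace G,
      I.toUniformSpace.toTopologicalSpace = ‹TopologicalSpace G› ∧
      (∀ g x y : G, I.toDist.dist (g * x) (g * y) = I.toDist.dist x y) ∧
      (∀ x y : G, I.toDist.dist x y = 0 → Inseparable x y) := by
  classical
  obtain ⟨W, hW, hWmul⟩ := IsTopologicalGroup.exists_antitone_basis_nhds_one (G := G)
  set V : ℕ → Set G := fun n => W (2 * n) ∩ (W (2 * n))⁻¹ with hVdef
  have hVmem : ∀ n, V n ∈ 𝓝 (1 : G) := fun n =>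
    Filter.inter_mem (hW.mem _) (inv_mem_nhds_one G (hW.mem _))
  have hVsymm : ∀ n, ∀ x : G, x ∈ V n → x⁻¹ ∈ V n := by
    intro n x hx
    exact ⟨hx.2, by simpa using hx.1⟩
  have hVanti : Antitone V := by
    intro m n hmn
    exact Set.inter_subset_inter (hW.antitone (by omega))
      (Set.inv_subset_inv.2 (hW.antitone (by omega)))
  have hWsub : ∀ n, W (n + 2) * W (n + 2) * W (n + 2) ⊆ W n := by
    intro n
    calc W (n + 2) * W (n + 2) * W (n + 2)
        ⊆ W (n + 1) * W (n + 2) := mul_subset_mul_right (hWmul (n + 1))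
      _ ⊆ W (n + 1) * W (n + 1) := mul_subset_mul_left (hW.antitone (by omega))
      _ ⊆ W n := hWmul n
  have hVtriple : ∀ ⦃m n : ℕ⦄, m < n → V n * V n * V n ⊆ V m := by
    intro m n hmn
    have h1 : V n ⊆ V (m + 1) := hVanti hmn
    have h2 : V (m + 1) ⊆ W (2 * m + 2) :=
      Set.inter_subset_left.trans (hW.antitone (by omega))
    have h3 : V n * V n * V n ⊆ W (2 * m) := by
      refine (mul_subset_mul (mul_subset_mul (h1.trans h2) (h1.trans h2))
        (h1.trans h2)).trans ?_
      simpa using hWsub (2 * m)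
    rintro x hx
    refine ⟨h3 hx, ?_⟩
    rcases hx with ⟨ab, ⟨a, ha, b, hb, rfl⟩, c, hc, rfl⟩
    have : c⁻¹ * b⁻¹ * a⁻¹ ∈ V n * V n * V n :=
      Set.mul_mem_mul (Set.mul_mem_mul (hVsymm _ _ hc) (hVsymm _ _ hb)) (hVsymm _ _ ha)
    have h4 := h3 this
    show (a * b * c)⁻¹ ∈ W (2 * m)
    simpa [mul_inv_rev, mul_assoc] using h4
  have hVbasis : (𝓝 (1 : G)).HasAntitoneBasis V :=
    ⟨hW.toHasBasis.to_hasBasis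
      (fun n _ => ⟨n, trivial, Set.inter_subset_left.trans (hW.antitone (by omega))⟩)
      (fun n _ => hW.toHasBasis.mem_iff.1 (hVmem n)), hVanti⟩
  letI u : UniformSpace G :=
    { toTopologicalSpace := ‹TopologicalSpace G›
      uniformity := comap (fun p : G × G => p.1⁻¹ * p.2) (𝓝 1)
      symm := by
        have : Tendsto (fun p : G × G => (p.1⁻¹ * p.2)⁻¹)
            (comap (fun p : G × G => p.1⁻¹ * p.2) (𝓝 1)) (𝓝 1⁻¹) :=
          tendsto_id.inv.comp tendsto_comap
        simpa [tendsto_comap_iff, Function.comp_def, mul_inv_rev] using this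
      comp := Tendsto.le_comap fun U H => by
        rcases exists_nhds_one_split H with ⟨S, S_nhds, S_mul⟩
        refine mem_map.2 (mem_of_superset (mem_lift' <| preimage_mem_comap S_nhds) ?_)
        rintro ⟨x, z⟩ ⟨y, hy₁, hy₂⟩
        have := S_mul _ hy₁ _ hy₂
        simpa [mul_assoc] using this
      nhds_eq_comap_uniformity := fun x => by
        rw [comap_comap]
        have h := (Homeomorph.mulLeft (x⁻¹ : G)).comap_nhds_eq 1
        simp only [Homeomorph.coe_mulLeft, Homeomorph.mulLeft_symm, mul_one] at h
        rw [show ((fun p : G × G => p.1⁻¹ * p.2) ∘ Prod.mk x) = fun y => x⁻¹ * y from rfl]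
        simpa using h.symm }
  set U : ℕ → Set (G × G) := fun n => {p : G × G | p.1⁻¹ * p.2 ∈ V n} with hUdef
  have hB : (𝓤 G).HasAntitoneBasis U := hVbasis.comap _
  have hU_symm : ∀ n, SetRel.IsSymm (U n) := by
    intro n
    constructor
    intro x y h
    have := hVsymm n _ h
    show y⁻¹ * x ∈ V n
    simpa [mul_inv_rev] using this
  have hU_comp : ∀ ⦃m n : ℕ⦄, m < n → U n ○ (U n ○ U n) ⊆ U m := by
    rintro m n hmn ⟨x, w⟩ ⟨y, hxy, z, hyz, hzw⟩
    have hmem : x⁻¹ * w ∈ V n * V n * V n := by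
      have : (x⁻¹ * y) * (y⁻¹ * z) * (z⁻¹ * w) ∈ V n * V n * V n :=
        Set.mul_mem_mul (Set.mul_mem_mul hxy hyz) hzw
      simpa [mul_assoc] using this
    exact hVtriple hmn hmem
  set d : G → G → ℝ≥0 := fun x y => if h : ∃ n, (x, y) ∉ U n then (1 / 2) ^ Nat.find h else 0
    with hd_def
  have hd₀ : ∀ {x y}, d x y = 0 ↔ Inseparable x y := by
    intro x y
    refine Iff.trans ?_ (hB.toHasBasis.inseparable_iff_uniformity (x := x) (y := y)).symm
    simp only [d, true_imp_iff]
    split_ifs with h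
    · rw [← not_forall] at h
      simp [h, pow_eq_zero_iff']
    · simpa only [not_exists, Classical.not_not, eq_self_iff_true, true_iff] using h
  have hd_symm : ∀ x y, d x y = d y x := by
    intro x y
    simp only [d, @SetRel.comm _ (U _) x y (hU_symm _)]
  have hd_inv : ∀ g x y : G, d (g * x) (g * y) = d x y := by
    intro g x y
    have hk : ∀ n, ((g * x, g * y) ∉ U n) ↔ ((x, y) ∉ U n) := by
      intro n
      have : (g * x)⁻¹ * (g * y) = x⁻¹ * y := by
        simp [mul_inv_rev, mul_assoc]
      simp only [hUdef, mem_setOf_eq, this]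
    simp only [d]
    by_cases h : ∃ n, (x, y) ∉ U n
    · have h' : ∃ n, (g * x, g * y) ∉ U n := by
        obtain ⟨n, hn⟩ := h
        exact ⟨n, (hk n).2 hn⟩
      rw [dif_pos h', dif_pos h, bk_find_congr hk h' h]
    · have h' : ¬∃ n, (g * x, g * y) ∉ U n := by
        intro hc
        obtain ⟨n, hn⟩ := hc
        exact h ⟨n, (hk n).1 hn⟩
      rw [dif_neg h', dif_neg h]
  have hr : (1 / 2 : ℝ≥0) ∈ Ioo (0 : ℝ≥0) 1 := ⟨half_pos one_pos, NNReal.half_lt_self one_ne_zero⟩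
  letI I := PseudoMetricSpace.ofPreNNDist d (fun x => hd₀.2 rfl) hd_symm
  have hdist_le : ∀ x y, dist x y ≤ d x y := PseudoMetricSpace.dist_ofPreNNDist_le _ _ _
  have hle_d : ∀ {x y : G} {n : ℕ}, (1 / 2) ^ n ≤ d x y ↔ (x, y) ∉ U n := by
    intro x y n
    dsimp only [d]
    split_ifs with h
    · rw [(pow_right_strictAnti₀ hr.1 hr.2).le_iff_ge, Nat.find_le_iff]
      exact ⟨fun ⟨m, hmn, hm⟩ hn => hm (hB.antitone hmn hn), fun h => ⟨n, le_rfl, h⟩⟩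
    · push_neg at h
      simp only [h, not_true, (pow_pos hr.1 _).not_ge]
  have hd_le : ∀ x y, ↑(d x y) ≤ 2 * dist x y := by
    refine PseudoMetricSpace.le_two_mul_dist_ofPreNNDist _ _ _ fun x₁ x₂ x₃ x₄ => ?_
    by_cases H : ∃ n, (x₁, x₄) ∉ U n
    · refine (dif_pos H).trans_le ?_
      rw [← div_le_iff₀' zero_lt_two, ← mul_one_div (_ ^ _), ← pow_succ]
      simp only [le_max_iff, hle_d, ← not_and_or]
      rintro ⟨h₁₂, h₂₃, h₃₄⟩
      refine Nat.find_spec H (hU_comp (lt_add_one <| Nat.find H) ?_)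
      exact ⟨x₂, h₁₂, x₃, h₂₃, h₃₄⟩
    · exact (dif_neg H).trans_le zero_le
  rw [mem_Ioo, ← NNReal.coe_lt_coe, ← NNReal.coe_lt_coe] at hr
  have huniv : I.toUniformSpace = u :=
    UniformSpace.ext <| (uniformity_basis_dist_pow hr.1 hr.2).ext hB.toHasBasis
      (fun n hn => ⟨n, trivial, fun x hx => (hdist_le _ _).trans_lt <| by
        rwa [← NNReal.coe_pow, NNReal.coe_lt_coe, ← not_le, hle_d, Classical.not_not]⟩)
      (fun n _ => ⟨n + 1, trivial, fun x hx => by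
        rw [mem_setOf_eq] at hx
        contrapose! hx
        refine le_trans ?_ ((div_le_iff₀' zero_lt_two).2 (hd_le x.1 x.2))
        rwa [← NNReal.coe_two, ← NNReal.coe_div, ← NNReal.coe_pow, NNReal.coe_le_coe, pow_succ,
          mul_one_div, div_le_iff₀ zero_lt_two, div_mul_cancel₀ _ two_ne_zero, hle_d]⟩)
  refine ⟨I, ?_, ?_, ?_⟩
  · rw [huniv]
    rfl
  · intro g x y
    show dist (g * x) (g * y) = dist x y
    rw [PseudoMetricSpace.dist_ofPreNNDist, PseudoMetricSpace.dist_ofPreNNDist]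
    refine congrArg _ ?_
    refine Function.Surjective.iInf_congr (fun l : List G => l.map (g⁻¹ * ·))
      (fun l => ⟨l.map (g * ·), by simp [List.map_map, Function.comp_def]⟩) fun l => ?_
    have h1 : x :: l.map (g⁻¹ * ·) = ((g * x) :: l).map (g⁻¹ * ·) := by
      simp [inv_mul_cancel_left]
    have h2 : l.map (g⁻¹ * ·) ++ [y] = (l ++ [g * y]).map (g⁻¹ * ·) := by
      simp [inv_mul_cancel_left]
    rw [h1, h2, List.zipWith_map]
    simp only [hd_inv]
  · intro x y hxy
    have h1 : (d x y : ℝ) ≤ 0 := by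
      have := hd_le x y
      rw [show dist x y = I.toDist.dist x y from rfl] at this
      simpa [hxy] using this
    have h2 : d x y = 0 := le_antisymm (by exact_mod_cast h1) zero_le
    exact hd₀.1 h2

/-- Birkhoff–Kakutani: a (Hausdorff) topological group admits a left invariant metric
generating its topology if and only if it is first countable. -/
theorem birkhoff_kakutani {G : Type*} [Group G] [TopologicalSpace G]
    [IsTopologicalGroup G] [T2Space G] :
    (∃ m : MetricSpace G,
      m.toUniformSpace.toTopologicalSpace = ‹TopologicalSpace G› ∧
      ∀ g x y : G, m.toPseudoMetricSpace.toDist.dist (g * x) (g * y)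
        = m.toPseudoMetricSpace.toDist.dist x y) ↔
    FirstCountableTopology G := by
  constructor
  · rintro ⟨m, hm, -⟩
    have : @FirstCountableTopology G m.toUniformSpace.toTopologicalSpace := by
      letI := m
      infer_instance
    exact hm ▸ this
  · intro hfc
    obtain ⟨I, htop, hinv, hsep⟩ := bk_aux (G := G)
    refine ⟨{ I with eq_of_dist_eq_zero := fun h => (hsep _ _ h).eq }, htop, hinv⟩
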